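/- Let p be an odd prime and let a ≥ 1 and n ≥ 0 be integers. Then the quotient ring ℤ_p⟦T⟧ / (T + p^a, (1+T)^{p^n} − 1) is isomorphic, as a ring, to ℤ/p^{a+n}ℤ. -/

import Mathlib

open PowerSeries

section EvalNilp

variable {R S : Type*} [CommRing R] [CommRing S] (σ : R →+* S) (c : S) (N : ℕ)

/-- Evaluation of a truncation of a coerced polynomial at a nilpotent element agrees with
evaluation of the polynomial itself. -/
lemma evalTrunc_coe (hc : c ^ N = 0) (Q : Polynomial R) :
    ((trunc N (Q : PowerSeries R)).map σ).eval c = (Q.map σ).eval c := by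
  have hdvd : (Polynomial.X : Polynomial R) ^ N ∣ Q - trunc N (Q : PowerSeries R) := by
    rw [Polynomial.X_pow_dvd_iff]
    intro d hd
    simp [coeff_trunc, hd, Polynomial.coeff_coe]
  obtain ⟨h, hh⟩ := hdvd
  have h2 := congrArg (fun q : Polynomial R => (q.map σ).eval c) hh
  simp only [Polynomial.map_sub, Polynomial.eval_sub, Polynomial.map_mul, Polynomial.map_pow,
    Polynomial.map_X, Polynomial.eval_mul, Polynomial.eval_pow, Polynomial.eval_X, hc,
    zero_mul] at h2
  exact (sub_eq_zero.mp h2).symm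

/-- Evaluation of a power series at a nilpotent element `c` with `c ^ N = 0`, as a ring hom. -/
noncomputable def evalNilp (hc : c ^ N = 0) (hN : 0 < N) : PowerSeries R →+* S where
  toFun f := ((trunc N f).map σ).eval c
  map_one' := by
    obtain ⟨m, rfl⟩ := Nat.exists_eq_succ_of_ne_zero hN.ne'
    simp [trunc_one]
  map_mul' f g := by
    have h1 : trunc N (f * g)
        = trunc N (((trunc N f * trunc N g : Polynomial R) : PowerSeries R)) := by
      rw [Polynomial.coe_mul]
      exact (trunc_trunc_mul_trunc f g).symm
    simp only [h1, evalTrunc_coe σ c N hc, Polynomial.map_mul, Polynomial.eval_mul]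
  map_zero' := by simp
  map_add' f g := by simp [map_add]

lemma evalNilp_coe (hc : c ^ N = 0) (hN : 0 < N) (Q : Polynomial R) :
    evalNilp σ c N hc hN (Q : PowerSeries R) = (Q.map σ).eval c :=
  evalTrunc_coe σ c N hc Q

end EvalNilp

/-- For an odd prime `p` and integers `a ≥ 1`, `n ≥ 0`, the quotient ring
`ℤ_p⟦T⟧ / (T + p^a, (1+T)^{p^n} − 1)` is isomorphic, as a ring, to `ℤ/p^{a+n}ℤ`. -/
theorem quotient_span_ringEquiv_zmod
    (p : ℕ) [Fact p.Prime] (hodd : Odd p) (a n : ℕ) (ha : 1 ≤ a) :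
    Nonempty
      ((PowerSeries ℤ_[p] ⧸ Ideal.span
          {(X : PowerSeries ℤ_[p]) + ((p : ℕ) : PowerSeries ℤ_[p]) ^ a,
            (1 + X : PowerSeries ℤ_[p]) ^ (p ^ n) - 1}) ≃+*
        ZMod (p ^ (a + n))) := by
  classical
  have hp : p.Prime := Fact.out
  set M := a + n with hMdef
  set σ : ℤ_[p] →+* ZMod (p ^ M) := PadicInt.toZModPow M with hσ
  have hpM : ((p : ZMod (p ^ M))) ^ M = 0 := by
    rw [← Nat.cast_pow, ZMod.natCast_self]
  set c : ZMod (p ^ M) := -((p : ZMod (p ^ M))) ^ a with hc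
  have hM0 : 0 < M := by omega
  have hcM : c ^ M = 0 := by
    have h1 : ((p : ZMod (p ^ M))) ^ (a * M) = 0 := by
      have h2 : ((p : ZMod (p ^ M))) ^ (a * M)
          = ((p : ZMod (p ^ M))) ^ M * ((p : ZMod (p ^ M))) ^ (a * M - M) := by
        rw [← pow_add]
        congr 1
        have : M ≤ a * M := Nat.le_mul_of_pos_left M (by omega)
        omega
      rw [h2, hpM, zero_mul]
    rw [hc, neg_pow, ← pow_mul, h1, mul_zero]
  set E : PowerSeries ℤ_[p] →+* ZMod (p ^ M) := evalNilp σ c M hcM hM0 with hE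
  set g1 : PowerSeries ℤ_[p] := X + ((p : ℕ) : PowerSeries ℤ_[p]) ^ a with hg1def
  set g2 : PowerSeries ℤ_[p] := (1 + X : PowerSeries ℤ_[p]) ^ (p ^ n) - 1 with hg2def
  set I : Ideal (PowerSeries ℤ_[p]) := Ideal.span {g1, g2} with hIdef
  -- basic computations of E
  have hEX : E X = c := by
    rw [hE, ← Polynomial.coe_X, evalNilp_coe]
    simp
  have hEC : ∀ r : ℤ_[p], E (C (R := ℤ_[p]) r) = σ r := by
    intro r
    rw [hE, ← Polynomial.coe_C, evalNilp_coe]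
    simp
  have hpC : ((p : ℕ) : PowerSeries ℤ_[p]) = C (R := ℤ_[p]) ((p : ℕ) : ℤ_[p]) :=
    (map_natCast (C (R := ℤ_[p])) p).symm
  set t : ℤ_[p] := -((p : ℤ_[p])) ^ a with ht
  have hg1t : g1 = X - C (R := ℤ_[p]) t := by
    rw [hg1def, hpC, ht, map_neg, map_pow, sub_neg_eq_add]
  have hEg1 : E g1 = 0 := by
    rw [hg1def, map_add, map_pow, map_natCast, hEX, hc]
    ring
  have hEg2 : E g2 = (1 + c) ^ (p ^ n) - 1 := by
    rw [hg2def, map_sub, map_pow, map_add, map_one, hEX]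
  -- number-theoretic input
  set D : ℤ := (1 - (p : ℤ) ^ a) ^ (p ^ n) - 1 with hD
  have hp2 : 2 ≤ p := hp.two_le
  have hpx : ¬ ((p : ℤ) ∣ (1 - (p : ℤ) ^ a)) := by
    intro h
    have h1 : (p : ℤ) ∣ (p : ℤ) ^ a := dvd_pow_self _ (by omega)
    have h2 : (p : ℤ) ∣ 1 := by
      have := dvd_add h h1
      simpa using this
    have := Int.le_of_dvd one_pos h2
    omega
  have hxy : (p : ℤ) ∣ (1 - (p : ℤ) ^ a) - 1 := by
    have he : (1 - (p : ℤ) ^ a) - 1 = -((p : ℤ) ^ a) := by ring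
    rw [he]
    exact (dvd_pow_self _ (by omega)).neg_right
  have hprime : Prime (p : ℤ) := Nat.prime_iff_prime_int.mp hp
  have hmult : emultiplicity ((p : ℤ)) D = ((M : ℕ) : ℕ∞) := by
    have h0 := Int.emultiplicity_pow_sub_pow hp hodd hxy hpx (p ^ n)
    rw [one_pow] at h0
    have h1 : (1 - (p : ℤ) ^ a) - 1 = -((p : ℤ) ^ a) := by ring
    rw [h1, emultiplicity_neg, emultiplicity_pow_self_of_prime hprime,
      emultiplicity_pow_self_of_prime hp.prime] at h0
    rw [hD, h0, hMdef]
    push_cast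
    rfl
  have hDdvd : (p : ℤ) ^ M ∣ D := pow_dvd_of_le_emultiplicity (le_of_eq hmult.symm)
  have hDnot : ¬ (p : ℤ) ^ (M + 1) ∣ D := by
    apply not_pow_dvd_of_emultiplicity_lt
    rw [hmult]
    exact_mod_cast lt_add_one M
  obtain ⟨u, hu⟩ := hDdvd
  have hpu : ¬ ((p : ℤ) ∣ u) := by
    rintro ⟨v, rfl⟩
    exact hDnot ⟨v, by rw [hu]; ring⟩
  have hunit : IsUnit ((u : ℤ_[p])) := by
    rw [PadicInt.isUnit_iff]
    have h2 : ¬ ‖((u : ℤ) : ℤ_[p])‖ < 1 := fun hlt =>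
      hpu ((PadicInt.norm_int_lt_one_iff_dvd u).mp hlt)
    exact le_antisymm (PadicInt.norm_le_one _) (not_lt.mp h2)
  -- ideal membership facts
  have hg1I : g1 ∈ I := Ideal.subset_span (by simp)
  have hg2I : g2 ∈ I := Ideal.subset_span (by simp)
  have hspan1 : ∀ f : PowerSeries ℤ_[p], g1 ∣ f → f ∈ I := by
    rintro f ⟨q, hq⟩
    rw [hq]
    exact Ideal.mul_mem_right _ _ hg1I
  have hw : C (R := ℤ_[p]) ((1 + t) ^ (p ^ n) - 1) ∈ I := by
    have hdvd : g1 ∣ (1 + X) ^ (p ^ n) - (1 + C (R := ℤ_[p]) t) ^ (p ^ n) := by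
      rw [hg1t]
      have h := sub_dvd_pow_sub_pow (1 + X : PowerSeries ℤ_[p]) (1 + C (R := ℤ_[p]) t) (p ^ n)
      simpa [add_sub_add_left_eq_sub] using h
    have hmem := hspan1 _ hdvd
    have he : C (R := ℤ_[p]) ((1 + t) ^ (p ^ n) - 1)
        = g2 - ((1 + X) ^ (p ^ n) - (1 + C (R := ℤ_[p]) t) ^ (p ^ n)) := by
      rw [hg2def, map_sub, map_pow, map_add, map_one]
      ring
    rw [he]
    exact Ideal.sub_mem _ hg2I hmem
  have hwD : ((1 + t) ^ (p ^ n) - 1 : ℤ_[p]) = ((D : ℤ) : ℤ_[p]) := by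
    rw [hD, ht]
    push_cast
    ring
  have hCpM : C (R := ℤ_[p]) ((p : ℤ_[p]) ^ M) ∈ I := by
    obtain ⟨v, hv⟩ := hunit.exists_right_inv
    have h1 : C (R := ℤ_[p]) ((p : ℤ_[p]) ^ M) = C (R := ℤ_[p]) ((1 + t) ^ (p ^ n) - 1) * C (R := ℤ_[p]) v := by
      rw [← map_mul]
      congr 1
      rw [hwD]
      have h2 : ((D : ℤ) : ℤ_[p]) = (p : ℤ_[p]) ^ M * (u : ℤ_[p]) := by
        rw [hu]
        push_cast
        ring
      rw [h2, mul_assoc, hv, mul_one]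
    rw [h1]
    exact Ideal.mul_mem_right _ _ hw
  have hXM : (X : PowerSeries ℤ_[p]) ^ M ∈ I := by
    have hdvd : g1 ∣ (X : PowerSeries ℤ_[p]) ^ M - (C (R := ℤ_[p]) t) ^ M := by
      rw [hg1t]
      exact sub_dvd_pow_sub_pow _ _ M
    have h2 : (C (R := ℤ_[p]) t) ^ M ∈ I := by
      obtain ⟨k, hk⟩ : ∃ k, a * M = M + k := by
        refine ⟨a * M - M, ?_⟩
        have : M ≤ a * M := Nat.le_mul_of_pos_left M (by omega)
        omega
      have he : (C (R := ℤ_[p]) t) ^ M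
          = C (R := ℤ_[p]) ((p : ℤ_[p]) ^ M) * C (R := ℤ_[p]) ((-1) ^ M * (p : ℤ_[p]) ^ k) := by
        rw [← map_pow, ← map_mul]
        congr 1
        rw [ht, neg_pow, ← pow_mul, hk, pow_add]
        ring
      rw [he]
      exact Ideal.mul_mem_right _ _ hCpM
    have h3 := hspan1 _ hdvd
    have he2 : (X : PowerSeries ℤ_[p]) ^ M
        = ((X : PowerSeries ℤ_[p]) ^ M - (C (R := ℤ_[p]) t) ^ M) + (C (R := ℤ_[p]) t) ^ M := by ring
    rw [he2]
    exact Ideal.add_mem _ h3 h2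
  -- kernel of E equals I
  have hIker : I ≤ RingHom.ker E := by
    rw [hIdef, Ideal.span_le]
    rintro x hx
    simp only [Set.mem_insert_iff, Set.mem_singleton_iff] at hx
    rcases hx with rfl | rfl
    · rw [SetLike.mem_coe, RingHom.mem_ker]
      exact hEg1
    · rw [SetLike.mem_coe, RingHom.mem_ker, hEg2]
      have hcast : ((D : ℤ) : ZMod (p ^ M)) = (1 + c) ^ (p ^ n) - 1 := by
        rw [hD, hc]
        push_cast
        ring
      rw [← hcast, ZMod.intCast_zmod_eq_zero_iff_dvd]
      have : ((p : ℤ) ^ M) ∣ D := ⟨u, hu⟩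
      exact_mod_cast this
  have hkerI : RingHom.ker E ≤ I := by
    intro f hf
    rw [RingHom.mem_ker] at hf
    set P := trunc M f with hPdef
    set r : ℤ_[p] := P.eval t with hr
    have h1 : f - (P : PowerSeries ℤ_[p]) ∈ I := by
      have hXdvd : (X : PowerSeries ℤ_[p]) ^ M ∣ f - ↑P := by
        rw [PowerSeries.X_pow_dvd_iff]
        intro m hm
        simp [hPdef, coeff_trunc, hm, Polynomial.coeff_coe]
      obtain ⟨g, hg⟩ := hXdvd
      rw [hg]
      exact Ideal.mul_mem_right _ _ hXM
    have h2 : (P : PowerSeries ℤ_[p]) - C (R := ℤ_[p]) r ∈ I := by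
      have hdvd : (X - C (R := ℤ_[p]) t : PowerSeries ℤ_[p]) ∣ (P : PowerSeries ℤ_[p]) - C (R := ℤ_[p]) r := by
        have h0 := map_dvd (Polynomial.coeToPowerSeries.ringHom (R := ℤ_[p]))
          (Polynomial.X_sub_C_dvd_sub_C_eval (a := t) (p := P))
        simpa [Polynomial.coeToPowerSeries.ringHom_apply, Polynomial.coe_sub, Polynomial.coe_X,
          Polynomial.coe_C, hr] using h0
      rw [← hg1t] at hdvd
      exact hspan1 _ hdvd
    have e1 : E (f - ↑P) = 0 := RingHom.mem_ker.mp (hIker h1)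
    have e2 : E ((P : PowerSeries ℤ_[p]) - C (R := ℤ_[p]) r) = 0 := RingHom.mem_ker.mp (hIker h2)
    have h3 : E (C (R := ℤ_[p]) r) = 0 := by
      have hfr : C (R := ℤ_[p]) r = f - (f - ↑P) - ((P : PowerSeries ℤ_[p]) - C (R := ℤ_[p]) r) := by ring
      rw [hfr, map_sub, map_sub, hf, e1, e2]
      ring
    have h4 : r ∈ Ideal.span {(p : ℤ_[p]) ^ M} := by
      rw [← PadicInt.ker_toZModPow M, RingHom.mem_ker]
      have := (hEC r).symm.trans h3
      exact this
    obtain ⟨s, hs⟩ := Ideal.mem_span_singleton'.mp h4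
    have h5 : C (R := ℤ_[p]) r ∈ I := by
      rw [← hs, map_mul]
      exact Ideal.mul_mem_left _ _ hCpM
    have he : f = (f - ↑P) + (((P : PowerSeries ℤ_[p]) - C (R := ℤ_[p]) r) + C (R := ℤ_[p]) r) := by ring
    rw [he]
    exact Ideal.add_mem _ h1 (Ideal.add_mem _ h2 h5)
  exact ⟨(Ideal.quotEquivOfEq (le_antisymm hIker hkerI)).trans
    (RingHom.quotientKerEquivOfSurjective (ZMod.ringHom_surjective E))⟩
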